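/- Fix T ∈ ℝ, T ≠ 0, and complex α, β with Re(α) > 0, Re(β) > 0. Let η(y,T,α,β) = ∫_{u>|T|} e^{-uy}(u+T)^{α-1}(u-T)^{β-1} du. Then lim_{y→∞} e^{Ty} y^{β} η(y,T,α,β) = 0 if T < 0, and lim_{y→∞} e^{Ty} y^{β} η(y,T,α,β) = Γ(β)(2T)^{α-1} if T > 0. -/

import Mathlib

open MeasureTheory Filter

open Set Real

private lemma integral_Ioi_comp_add_right {E : Type*} [NormedAddCommGroup E] [NormedSpace ℝ E]
    (g : ℝ → E) (a b : ℝ) :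
    (∫ x in Set.Ioi a, g (x + b)) = ∫ x in Set.Ioi (a + b), g x := by
  rw [← integral_indicator measurableSet_Ioi, ← integral_indicator measurableSet_Ioi,
    ← integral_add_right_eq_self (Set.indicator (Set.Ioi (a + b)) g) b]
  congr 1 with x
  simp only [Set.indicator_apply, Set.mem_Ioi, add_lt_add_iff_right]

private lemma aux_integrable (a b c : ℝ) (hc : 0 < c) (hb : -1 < b) :
    IntegrableOn (fun t : ℝ => Real.exp (-t) * t ^ b * (t + c) ^ a) (Set.Ioi 0) := by
  have hcont : ContinuousOn (fun t : ℝ => Real.exp (-t) * t ^ b * (t + c) ^ a) (Set.Ioi 0) := by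
    refine ((continuousOn_id.neg.rexp.mul
      (continuousOn_id.rpow_const fun x hx => Or.inl (ne_of_gt hx))).mul
      ((continuousOn_id.add continuousOn_const).rpow_const fun x hx => Or.inl ?_))
    have : (0:ℝ) < x := hx
    show x + c ≠ 0
    positivity
  rw [← Set.Ioc_union_Ioi_eq_Ioi (zero_le_one : (0:ℝ) ≤ 1), integrableOn_union]
  constructor
  · have hint : IntegrableOn (fun t : ℝ => t ^ b) (Set.Ioc (0:ℝ) 1) :=
      (intervalIntegrable_iff_integrableOn_Ioc_of_le zero_le_one).mp
        (intervalIntegral.intervalIntegrable_rpow' hb)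
    refine Integrable.mono' (hint.const_mul (max (c ^ a) ((1 + c) ^ a)))
      ((hcont.mono Set.Ioc_subset_Ioi_self).aestronglyMeasurable measurableSet_Ioc) ?_
    filter_upwards [ae_restrict_mem measurableSet_Ioc] with t ht
    obtain ⟨ht0, ht1⟩ := ht
    have h1 : (0:ℝ) < t + c := by linarith
    rw [Real.norm_eq_abs, abs_of_nonneg (by positivity)]
    have he : Real.exp (-t) ≤ 1 := by
      rw [← Real.exp_zero]; exact Real.exp_le_exp.mpr (by linarith)
    have hca : (t + c) ^ a ≤ max (c ^ a) ((1 + c) ^ a) := by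
      rcases le_total 0 a with h | h
      · exact le_max_of_le_right (Real.rpow_le_rpow h1.le (by linarith) h)
      · exact le_max_of_le_left (Real.rpow_le_rpow_of_nonpos hc (by linarith) h)
    calc Real.exp (-t) * t ^ b * (t + c) ^ a
        ≤ 1 * t ^ b * max (c ^ a) ((1 + c) ^ a) := by gcongr <;> positivity
      _ = max (c ^ a) ((1 + c) ^ a) * t ^ b := by ring
  · have hint : IntegrableOn (fun t : ℝ => Real.exp (-t) * t ^ (max b 0 + max a 0)) (Set.Ioi 1) := by
      have h := Real.GammaIntegral_convergent (show (0:ℝ) < max b 0 + max a 0 + 1 by positivity)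
      simp only [add_sub_cancel_right] at h
      exact h.mono_set (Set.Ioi_subset_Ioi zero_le_one)
    refine Integrable.mono' (hint.const_mul (max (c ^ a) 1 * (1 + c) ^ max a 0))
      ((hcont.mono (Set.Ioi_subset_Ioi zero_le_one)).aestronglyMeasurable measurableSet_Ioi) ?_
    filter_upwards [ae_restrict_mem measurableSet_Ioi] with t ht
    have ht0 : (0:ℝ) < t := zero_lt_one.trans ht
    have h1 : (0:ℝ) < t + c := by linarith
    rw [Real.norm_eq_abs, abs_of_nonneg (by positivity)]
    have hA : t ^ b ≤ t ^ max b 0 := Real.rpow_le_rpow_of_exponent_le ht.le (le_max_left _ _)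
    have hB : (t + c) ^ a ≤ max (c ^ a) 1 * ((1 + c) ^ max a 0 * t ^ max a 0) := by
      rcases le_total 0 a with h | h
      · have h2 : t + c ≤ (1 + c) * t := by nlinarith [mul_le_mul_of_nonneg_left ht.le hc.le]
        have h3 := Real.rpow_le_rpow h1.le h2 h
        rw [Real.mul_rpow (by linarith) ht0.le] at h3
        rw [max_eq_left h]
        calc (t + c) ^ a ≤ (1 + c) ^ a * t ^ a := h3
          _ ≤ max (c ^ a) 1 * ((1 + c) ^ a * t ^ a) :=
            le_mul_of_one_le_left (by positivity) (le_max_right _ _)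
      · have h2 : (t + c) ^ a ≤ c ^ a := Real.rpow_le_rpow_of_nonpos hc (by linarith) h
        rw [max_eq_right h, Real.rpow_zero, Real.rpow_zero]
        calc (t + c) ^ a ≤ c ^ a := h2
          _ ≤ max (c ^ a) 1 := le_max_left _ _
          _ = max (c ^ a) 1 * (1 * 1) := by ring
    calc Real.exp (-t) * t ^ b * (t + c) ^ a
        ≤ Real.exp (-t) * t ^ max b 0 * (max (c ^ a) 1 * ((1 + c) ^ max a 0 * t ^ max a 0)) := by
          gcongr <;> positivity
      _ = max (c ^ a) 1 * (1 + c) ^ max a 0 * (Real.exp (-t) * t ^ (max b 0 + max a 0)) := by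
          rw [Real.rpow_add ht0]; ring

/-- Shimura's genus 1 confluent hypergeometric function
`η(y,T,α,β) = ∫_{u>|T|} e^{-uy} (u+T)^{α-1} (u-T)^{β-1} du`. -/
noncomputable def eta1 (y T : ℝ) (α β : ℂ) : ℂ :=
  ∫ u in Set.Ioi |T|, Complex.exp (-((u * y : ℝ) : ℂ)) *
    ((u + T : ℝ) : ℂ) ^ (α - 1) * ((u - T : ℝ) : ℂ) ^ (β - 1)

/-- asymptotics of `η(y,T,α,β)` as `y → ∞`:
`e^{Ty} y^β η(y,T,α,β) → 0` if `T < 0`, and `→ Γ(β)(2T)^{α-1}` if `T > 0`. -/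
theorem eta1_asymptotics (T : ℝ) (hT : T ≠ 0) (α β : ℂ)
    (hα : 0 < α.re) (hβ : 0 < β.re) :
    (T < 0 →
      Tendsto (fun y : ℝ => Complex.exp ((T * y : ℝ) : ℂ) * (y : ℂ) ^ β * eta1 y T α β)
        atTop (nhds 0)) ∧
    (0 < T →
      Tendsto (fun y : ℝ => Complex.exp ((T * y : ℝ) : ℂ) * (y : ℂ) ^ β * eta1 y T α β)
        atTop (nhds (Complex.Gamma β * ((2 * T : ℝ) : ℂ) ^ (α - 1)))) := by
  constructor
  · intro hT'
    set D : ℝ := ∫ s in Set.Ioi (0:ℝ), Real.exp (-s) * s ^ (α.re - 1) * (s + -(2*T)) ^ (β.re - 1)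
      with hD
    have hDint : IntegrableOn (fun s : ℝ => Real.exp (-s) * s ^ (α.re - 1) * (s + -(2*T)) ^ (β.re - 1))
        (Set.Ioi 0) := aux_integrable _ _ _ (by linarith) (by linarith)
    have hDnn : 0 ≤ D := by
      apply setIntegral_nonneg measurableSet_Ioi
      intro s hs
      have h1 : (0:ℝ) < s := hs
      have h2 : (0:ℝ) < s + -(2*T) := by linarith
      exact mul_nonneg (mul_nonneg (Real.exp_pos _).le (Real.rpow_nonneg h1.le _))
        (Real.rpow_nonneg h2.le _)
    apply squeeze_zero_norm'
      (a := fun y : ℝ => D * (y ^ β.re * Real.exp (-(-(2*T)) * y)))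
    · filter_upwards [eventually_ge_atTop (1:ℝ)] with y hy1
      have hy0 : (0:ℝ) < y := lt_of_lt_of_le zero_lt_one hy1
      -- rewrite eta1 via substitution
      have hsub : eta1 y T α β = ∫ s in Set.Ioi (0:ℝ),
          Complex.exp (-(((s + -T) * y : ℝ) : ℂ)) * (((s + -T) + T : ℝ) : ℂ) ^ (α - 1) *
            (((s + -T) - T : ℝ) : ℂ) ^ (β - 1) := by
        rw [eta1, abs_of_neg hT']
        rw [integral_Ioi_comp_add_right (fun u => Complex.exp (-((u * y : ℝ) : ℂ)) *
          ((u + T : ℝ) : ℂ) ^ (α - 1) * ((u - T : ℝ) : ℂ) ^ (β - 1)) 0 (-T), zero_add]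
      have hbound : ‖eta1 y T α β‖ ≤ Real.exp (T * y) * D := by
        rw [hsub]
        refine le_trans (norm_integral_le_integral_norm _) ?_
        have : Real.exp (T * y) * D = ∫ s in Set.Ioi (0:ℝ),
            Real.exp (T * y) * (Real.exp (-s) * s ^ (α.re - 1) * (s + -(2*T)) ^ (β.re - 1)) := by
          rw [integral_const_mul]
        rw [this]
        refine integral_mono_of_nonneg (Filter.Eventually.of_forall fun s => norm_nonneg _)
          (hDint.const_mul _) ?_
        filter_upwards [ae_restrict_mem measurableSet_Ioi] with s hs
        have hs0 : (0:ℝ) < s := hs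
        have h2T : (0:ℝ) < s + -(2*T) := by linarith
        simp only [norm_mul]
        have e1 : ‖Complex.exp (-(((s + -T) * y : ℝ) : ℂ))‖ =
            Real.exp (-((s + -T) * y)) := by
          rw [← Complex.ofReal_neg, Complex.norm_exp_ofReal]
        have e2 : ‖(((s + -T) + T : ℝ) : ℂ) ^ (α - 1)‖ = s ^ (α.re - 1) := by
          have : ((s + -T) + T : ℝ) = s := by ring
          rw [this, Complex.norm_cpow_eq_rpow_re_of_pos hs0]
          simp
        have e3 : ‖(((s + -T) - T : ℝ) : ℂ) ^ (β - 1)‖ = (s + -(2*T)) ^ (β.re - 1) := by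
          have : ((s + -T) - T : ℝ) = s + -(2*T) := by ring
          rw [this, Complex.norm_cpow_eq_rpow_re_of_pos h2T]
          simp
        rw [e1, e2, e3]
        have hexp : Real.exp (-((s + -T) * y)) ≤ Real.exp (T * y) * Real.exp (-s) := by
          rw [← Real.exp_add]
          apply Real.exp_le_exp.mpr
          nlinarith [mul_le_mul_of_nonneg_left hy1 hs0.le]
        calc Real.exp (-((s + -T) * y)) * s ^ (α.re - 1) * (s + -(2*T)) ^ (β.re - 1)
            ≤ (Real.exp (T * y) * Real.exp (-s)) * s ^ (α.re - 1) * (s + -(2*T)) ^ (β.re - 1) := by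
              gcongr
          _ = Real.exp (T * y) * (Real.exp (-s) * s ^ (α.re - 1) * (s + -(2*T)) ^ (β.re - 1)) := by
              ring
      calc ‖Complex.exp ((T * y : ℝ) : ℂ) * (y : ℂ) ^ β * eta1 y T α β‖
          = Real.exp (T * y) * (y ^ β.re) * ‖eta1 y T α β‖ := by
            simp only [norm_mul, Complex.norm_exp_ofReal,
              Complex.norm_cpow_eq_rpow_re_of_pos hy0]
        _ ≤ Real.exp (T * y) * (y ^ β.re) * (Real.exp (T * y) * D) := by
            gcongr
        _ = D * (y ^ β.re * Real.exp (-(-(2*T)) * y)) := by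
            rw [show (-(-(2*T)) * y) = T*y + T*y by ring, Real.exp_add]
            ring
    · have h0 := tendsto_rpow_mul_exp_neg_mul_atTop_nhds_zero β.re (-(2*T)) (by linarith)
      simpa using h0.const_mul D
  · intro hT'
    -- the rescaled integrand
    set H : ℝ → ℝ → ℂ := fun y t => ((Real.exp (-t) : ℝ) : ℂ) * ((t : ℝ) : ℂ) ^ (β - 1) *
      ((t * y⁻¹ + 2 * T : ℝ) : ℂ) ^ (α - 1) with hH
    -- Step 1: representation for y ≥ 1
    have hrepr : ∀ y : ℝ, 1 ≤ y →
        Complex.exp ((T * y : ℝ) : ℂ) * (y : ℂ) ^ β * eta1 y T α β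
          = ∫ t in Set.Ioi (0:ℝ), H y t := by
      intro y hy1
      have hy0 : (0:ℝ) < y := lt_of_lt_of_le zero_lt_one hy1
      have hyC : (y:ℂ) ≠ 0 := Complex.ofReal_ne_zero.mpr hy0.ne'
      set G : ℝ → ℂ := fun u => Complex.exp (-((u * y : ℝ) : ℂ)) *
        ((u + T : ℝ) : ℂ) ^ (α - 1) * ((u - T : ℝ) : ℂ) ^ (β - 1) with hG
      have h1 : eta1 y T α β = ∫ x in Set.Ioi (0:ℝ), G (x + T) := by
        have h0 := integral_Ioi_comp_add_right G 0 T
        rw [zero_add] at h0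
        rw [eta1, abs_of_pos hT']
        exact h0.symm
      have h2 : (∫ t in Set.Ioi (0:ℝ), G (t * y⁻¹ + T)) = y • ∫ x in Set.Ioi (0:ℝ), G (x + T) := by
        have := integral_comp_mul_right_Ioi (fun x => G (x + T)) 0 (inv_pos.mpr hy0)
        simp only [zero_mul, inv_inv] at this
        exact this
      have h3 : eta1 y T α β = y⁻¹ • ∫ t in Set.Ioi (0:ℝ), G (t * y⁻¹ + T) := by
        rw [h2, h1, smul_smul, inv_mul_cancel₀ hy0.ne', one_smul]
      -- rewrite the integrand
      have h4 : (∫ t in Set.Ioi (0:ℝ), G (t * y⁻¹ + T)) =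
          Complex.exp (-((T * y : ℝ) : ℂ)) * (((y⁻¹ : ℝ) : ℂ) ^ (β - 1) *
            ∫ t in Set.Ioi (0:ℝ), H y t) := by
        rw [← integral_const_mul, ← integral_const_mul]
        refine setIntegral_congr_fun measurableSet_Ioi fun t ht => ?_
        have ht0 : (0:ℝ) < t := ht
        simp only [hG, hH]
        have e1 : (t * y⁻¹ + T) * y = t + T * y := by field_simp
        have e2 : Complex.exp (-(((t * y⁻¹ + T) * y : ℝ) : ℂ)) =
            Complex.exp (-((T * y : ℝ) : ℂ)) * ((Real.exp (-t) : ℝ) : ℂ) := by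
          rw [e1, Complex.ofReal_exp, ← Complex.exp_add]
          congr 1
          push_cast
          ring
        have e3 : ((t * y⁻¹ + T) - T : ℝ) = t * y⁻¹ := by ring
        have e4 : (((t * y⁻¹ : ℝ)) : ℂ) ^ (β - 1) = ((t:ℝ):ℂ) ^ (β - 1) * ((y⁻¹:ℝ):ℂ) ^ (β - 1) := by
          rw [Complex.ofReal_mul]
          exact Complex.mul_cpow_ofReal_nonneg ht0.le (inv_nonneg.mpr hy0.le) _
        have e5 : ((t * y⁻¹ + T) + T : ℝ) = t * y⁻¹ + 2 * T := by ring
        rw [e3, e4, e5, e2]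
        ring
      rw [h3, h4]
      have hsmul : ∀ z : ℂ, y⁻¹ • z = ((y⁻¹ : ℝ) : ℂ) * z := fun z => Complex.real_smul.trans rfl
      rw [hsmul]
      -- now pure algebra of constants
      have harg : ((y:ℂ)).arg ≠ Real.pi := by
        rw [Complex.arg_ofReal_of_nonneg hy0.le]
        exact Real.pi_ne_zero.symm
      have hicp : ((y⁻¹ : ℝ) : ℂ) ^ (β - 1) = ((y:ℂ) ^ (β - 1))⁻¹ := by
        rw [Complex.ofReal_inv, Complex.inv_cpow _ _ harg]
      have hne : (y:ℂ) ^ (β - 1) ≠ 0 := by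
        rw [Complex.cpow_def_of_ne_zero hyC]
        exact Complex.exp_ne_zero _
      have hexp : Complex.exp ((T * y : ℝ) : ℂ) * Complex.exp (-((T * y : ℝ) : ℂ)) = 1 := by
        rw [← Complex.exp_add, add_neg_cancel, Complex.exp_zero]
      have hyβ : (y:ℂ) ^ β = (y:ℂ) ^ (β - 1) * (y:ℂ) := by
        conv_lhs => rw [show β = β - 1 + 1 by ring]
        rw [Complex.cpow_add _ _ hyC, Complex.cpow_one]
      rw [hicp, hyβ, Complex.ofReal_inv]
      have key2 : Complex.exp (((T * y : ℝ) : ℂ)) * ((y:ℂ) ^ (β - 1) * (y:ℂ)) * (((y:ℂ))⁻¹ *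
          (Complex.exp (-((T * y : ℝ) : ℂ)) * (((y:ℂ) ^ (β - 1))⁻¹ * ∫ t in Set.Ioi (0:ℝ), H y t)))
          = (Complex.exp (((T * y : ℝ) : ℂ)) * Complex.exp (-((T * y : ℝ) : ℂ))) *
            ((y:ℂ) ^ (β - 1) * ((y:ℂ) ^ (β - 1))⁻¹) * ((y:ℂ) * ((y:ℂ))⁻¹) *
            ∫ t in Set.Ioi (0:ℝ), H y t := by ring
      rw [key2, hexp, mul_inv_cancel₀ hne, mul_inv_cancel₀ hyC]
      ring
    -- Step 2: dominated convergence
    have hlim : Tendsto (fun y : ℝ => ∫ t in Set.Ioi (0:ℝ), H y t) atTop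
        (nhds (Complex.Gamma β * ((2 * T : ℝ) : ℂ) ^ (α - 1))) := by
      have key : Tendsto (fun y : ℝ => ∫ t in Set.Ioi (0:ℝ), H y t) atTop
          (nhds (∫ t in Set.Ioi (0:ℝ),
            ((Real.exp (-t) : ℝ) : ℂ) * ((t : ℝ) : ℂ) ^ (β - 1) * ((2 * T : ℝ) : ℂ) ^ (α - 1))) := by
        refine tendsto_integral_filter_of_dominated_convergence
          (fun t => Real.exp (-t) * t ^ (β.re - 1) *
            ((t + 2*T) ^ (α.re - 1) + (2*T) ^ (α.re - 1))) ?_ ?_ ?_ ?_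
        · -- measurability
          filter_upwards [eventually_ge_atTop (1:ℝ)] with y hy1
          have hy0 : (0:ℝ) < y := lt_of_lt_of_le zero_lt_one hy1
          refine ContinuousOn.aestronglyMeasurable ?_ measurableSet_Ioi
          have c1 : Continuous fun t : ℝ => ((Real.exp (-t) : ℝ) : ℂ) :=
            Complex.continuous_ofReal.comp (Real.continuous_exp.comp continuous_neg)
          have c2 : ContinuousOn (fun t : ℝ => ((t:ℝ):ℂ) ^ (β - 1)) (Set.Ioi 0) := by
            refine continuousOn_of_forall_continuousAt fun t ht => ?_
            exact (continuousAt_cpow_const (Complex.ofReal_mem_slitPlane.2 ht)).comp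
              Complex.continuous_ofReal.continuousAt
          have c3 : ContinuousOn (fun t : ℝ => ((t * y⁻¹ + 2 * T : ℝ) : ℂ) ^ (α - 1))
              (Set.Ioi 0) := by
            refine continuousOn_of_forall_continuousAt fun t ht => ?_
            have ht0 : (0:ℝ) < t := ht
            have hpos : (0:ℝ) < t * y⁻¹ + 2 * T := by positivity
            have cin : Continuous fun t : ℝ => ((t * y⁻¹ + 2 * T : ℝ) : ℂ) :=
              Complex.continuous_ofReal.comp (by continuity)
            exact ContinuousAt.comp (x := t) (f := fun t : ℝ => ((t * y⁻¹ + 2 * T : ℝ) : ℂ))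
              (continuousAt_cpow_const (Complex.ofReal_mem_slitPlane.2 hpos)) cin.continuousAt
          exact (c1.continuousOn.mul c2).mul c3
        · -- bound
          filter_upwards [eventually_ge_atTop (1:ℝ)] with y hy1
          have hy0 : (0:ℝ) < y := lt_of_lt_of_le zero_lt_one hy1
          filter_upwards [ae_restrict_mem measurableSet_Ioi] with t ht
          have ht0 : (0:ℝ) < t := ht
          have hq : t * y⁻¹ ≤ t := by
            rw [← div_eq_mul_inv]
            exact div_le_self ht0.le hy1
          have hqpos : (0:ℝ) < t * y⁻¹ + 2 * T := by positivity
          simp only [hH, norm_mul, Complex.norm_real, Real.norm_eq_abs,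
            Complex.norm_cpow_eq_rpow_re_of_pos ht0, Complex.norm_cpow_eq_rpow_re_of_pos hqpos]
          rw [abs_of_nonneg (Real.exp_pos _).le]
          simp only [Complex.sub_re, Complex.one_re]
          have hbd : (t * y⁻¹ + 2 * T) ^ (α.re - 1) ≤
              (t + 2*T) ^ (α.re - 1) + (2*T) ^ (α.re - 1) := by
            rcases le_total 0 (α.re - 1) with h | h
            · refine le_add_of_le_of_nonneg ?_ (Real.rpow_nonneg (by positivity) _)
              exact Real.rpow_le_rpow hqpos.le (by linarith) h
            · refine le_add_of_nonneg_of_le (Real.rpow_nonneg (by positivity) _) ?_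
              have h5 : (0:ℝ) ≤ t * y⁻¹ := by positivity
              exact Real.rpow_le_rpow_of_nonpos (by positivity) (by linarith) h
          gcongr
        · -- integrable bound
          simp only [mul_add]
          exact ((aux_integrable (α.re - 1) (β.re - 1) (2*T) (by positivity) (by linarith)).add
            ((Real.GammaIntegral_convergent hβ).mul_const ((2*T) ^ (α.re - 1))))
        · -- pointwise limit
          filter_upwards [ae_restrict_mem measurableSet_Ioi] with t ht
          have ht0 : (0:ℝ) < t := ht
          simp only [hH]
          rw [show (fun y : ℝ => ((Real.exp (-t) : ℝ) : ℂ) * ((t : ℝ) : ℂ) ^ (β - 1) *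
              ((t * y⁻¹ + 2 * T : ℝ) : ℂ) ^ (α - 1)) = fun y : ℝ =>
              (((Real.exp (-t) : ℝ) : ℂ) * ((t : ℝ) : ℂ) ^ (β - 1)) *
              ((t * y⁻¹ + 2 * T : ℝ) : ℂ) ^ (α - 1) from funext fun y => by ring]
          refine Tendsto.const_mul _ ?_
          have r1 : Tendsto (fun y : ℝ => t * y⁻¹ + 2 * T) atTop (nhds (2 * T)) := by
            have h0 : Tendsto (fun r : ℝ => r⁻¹) atTop (nhds 0) := tendsto_inv_atTop_zero
            simpa using (h0.const_mul t).add_const (2 * T)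
          have r3 : ContinuousAt (fun x : ℝ => ((x : ℝ) : ℂ) ^ (α - 1)) (2 * T) :=
            (continuousAt_cpow_const (Complex.ofReal_mem_slitPlane.2 (by positivity))).comp
              Complex.continuous_ofReal.continuousAt
          exact (r3.tendsto.comp r1)
      convert key using 2
      rw [integral_mul_const]
      congr 1
      exact Complex.Gamma_eq_integral hβ
    exact hlim.congr' (by filter_upwards [eventually_ge_atTop (1:ℝ)] with y hy
      using (hrepr y hy).symm)
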